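/- Let (X, ⊤_X) be a locality set, let Q_X be the quiver of X, and let (X_{Q_X}, ⊤_{X_{Q_X}}) be the locality set of the quiver Q_X. Then X_{Q_X} = X as sets, ⊤_X ⊆ ⊤_{X_{Q_X}}, and (X_{Q_X}, ⊤_{X_{Q_X}}) is a regular locality set; explicitly, (α, β) ∈ ⊤_{X_{Q_X}} if and only if there exist n ≥ 0 and α_1, …, α_n, β_1, …, β_n ∈ X with (α, β_1), (α_1, β_1), (α_1, β_2), …, (α_n, β_n), (α_n, β) ∈ ⊤_X (where for n = 0 this means (α, β) ∈ ⊤_X). -/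

import Mathlib

/-- A locality set `(X, ⊤)` is regular if whenever
`(α, β₁), (α₁, β₁), (α₁, β) ∈ ⊤` one also has `(α, β) ∈ ⊤`. -/
def IsRegularLocality {X : Type} (top : X → X → Prop) : Prop :=
  ∀ α β α₁ β₁, top α β₁ → top α₁ β₁ → top α₁ β → top α β

/-- On the disjoint union `X_s ⊔ X_t` of two copies of `X` (`Sum.inl` being the
source copy `X_s` and `Sum.inr` the target copy `X_t`), the relation
`α_t ∼ β_s` whenever `(α, β) ∈ ⊤`. -/
def locSim {X : Type} (top : X → X → Prop) : X ⊕ X → X ⊕ X → Prop :=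
  fun u v => ∃ α β, top α β ∧ u = Sum.inr α ∧ v = Sum.inl β

/-- The vertex set of the quiver of a locality set `(X, ⊤)`: the quotient of
`X_s ⊔ X_t` by the equivalence relation generated by `∼`. -/
def locVertices {X : Type} (top : X → X → Prop) : Type :=
  Quot (locSim top)

/-- The source map of the quiver of a locality set: `s_Q(α)` is the class of `α_s`. -/
def locSrc {X : Type} (top : X → X → Prop) (α : X) : locVertices top :=
  Quot.mk (locSim top) (Sum.inl α)

/-- The target map of the quiver of a locality set: `t_Q(α)` is the class of `α_t`. -/
def locTgt {X : Type} (top : X → X → Prop) (α : X) : locVertices top :=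
  Quot.mk (locSim top) (Sum.inr α)

/-- The locality relation of the locality set of the quiver `Q_X` of a locality
set `(X, ⊤)`: the arrow set of `Q_X` is `X` itself, and
`⊤_{X_{Q_X}} = {(α, β) : t_Q(α) = s_Q(β)}`. -/
def topQX {X : Type} (top : X → X → Prop) : X → X → Prop :=
  fun α β => locTgt top α = locSrc top β

/-- Reachability from `α_t` to `β_s` in the bipartite graph: chains
`α - β₁ - α₁ - β₂ - ⋯ - αₙ - β`. -/
inductive TChain {X : Type} (top : X → X → Prop) : X → X → Prop
  | base {α β} : top α β → TChain top α β
  | step {α β₁ α₁ β} : top α β₁ → top α₁ β₁ → TChain top α₁ β → TChain top α β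

namespace TChain

variable {X : Type} {top : X → X → Prop}

lemma append {α β α₁ β₁ : X} (h : TChain top α β) (h1 : top α₁ β)
    (h2 : TChain top α₁ β₁) : TChain top α β₁ := by
  induction h with
  | base h0 => exact step h0 h1 h2
  | step hc ha _ ih => exact step hc ha (ih h1)

lemma trans1 {α β α₁ β₁ : X} (hm : TChain top α₁ β) (h : TChain top α β)
    (h2 : TChain top α₁ β₁) : TChain top α β₁ := by
  induction hm generalizing α β₁ with
  | base h0 => exact h.append h0 h2
  | @step a c a' b hc ha hT ih => exact ih h (step ha hc h2)

end TChain

/-- The explicit description of the equivalence closure of `locSim`. -/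
def locE {X : Type} (top : X → X → Prop) : X ⊕ X → X ⊕ X → Prop
  | Sum.inl b, Sum.inl b' => b = b' ∨ ∃ a, TChain top a b ∧ TChain top a b'
  | Sum.inl b, Sum.inr a => TChain top a b
  | Sum.inr a, Sum.inl b => TChain top a b
  | Sum.inr a, Sum.inr a' => a = a' ∨ ∃ b, TChain top a b ∧ TChain top a' b

lemma locE_refl {X : Type} (top : X → X → Prop) (u : X ⊕ X) : locE top u u := by
  cases u <;> exact Or.inl rfl

lemma locE_symm {X : Type} {top : X → X → Prop} {u v : X ⊕ X}
    (h : locE top u v) : locE top v u := by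
  cases u <;> cases v <;> simp only [locE] at * <;>
    first
    | exact h
    | (rcases h with h | ⟨c, h1, h2⟩
       · exact Or.inl h.symm
       · exact Or.inr ⟨c, h2, h1⟩)

lemma locE_trans {X : Type} {top : X → X → Prop} {u v w : X ⊕ X}
    (h1 : locE top u v) (h2 : locE top v w) : locE top u w := by
  cases u with
  | inl b =>
    cases v with
    | inl b' =>
      cases w with
      | inl b'' =>
        rcases h1 with rfl | ⟨a, ha1, ha2⟩
        · exact h2
        rcases h2 with rfl | ⟨a', hb1, hb2⟩
        · exact Or.inr ⟨a, ha1, ha2⟩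
        · exact Or.inr ⟨a, ha1, hb1.trans1 ha2 hb2⟩
      | inr a =>
        rcases h1 with rfl | ⟨a', ha1, ha2⟩
        · exact h2
        · exact ha2.trans1 h2 ha1
    | inr a =>
      cases w with
      | inl b' => exact Or.inr ⟨a, h1, h2⟩
      | inr a' =>
        rcases h2 with rfl | ⟨c, hc1, hc2⟩
        · exact h1
        · exact hc1.trans1 hc2 h1
  | inr a =>
    cases v with
    | inl b =>
      cases w with
      | inl b' =>
        rcases h2 with rfl | ⟨a', ha1, ha2⟩
        · exact h1
        · exact ha1.trans1 h1 ha2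
      | inr a' => exact Or.inr ⟨b, h1, h2⟩
    | inr a' =>
      cases w with
      | inl b =>
        rcases h1 with rfl | ⟨c, hc1, hc2⟩
        · exact h2
        · exact hc2.trans1 hc1 h2
      | inr a'' =>
        rcases h1 with rfl | ⟨c, hc1, hc2⟩
        · exact h2
        rcases h2 with rfl | ⟨c', hd1, hd2⟩
        · exact Or.inr ⟨c, hc1, hc2⟩
        · exact Or.inr ⟨c', hc2.trans1 hc1 hd1, hd2⟩

lemma tchain_eqvGen {X : Type} {top : X → X → Prop} {α β : X}
    (h : TChain top α β) :
    Relation.EqvGen (locSim top) (Sum.inr α) (Sum.inl β) := by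
  induction h with
  | base h0 => exact Relation.EqvGen.rel _ _ ⟨_, _, h0, rfl, rfl⟩
  | @step a c a' b hc ha _ ih =>
    exact (Relation.EqvGen.rel _ _ ⟨_, _, hc, rfl, rfl⟩).trans _ _ _
      (((Relation.EqvGen.rel _ _ ⟨_, _, ha, rfl, rfl⟩).symm _ _).trans _ _ _ ih)

lemma eqvGen_iff_locE {X : Type} {top : X → X → Prop} {u v : X ⊕ X} :
    Relation.EqvGen (locSim top) u v ↔ locE top u v := by
  constructor
  · intro h
    induction h with
    | rel x y hxy => rcases hxy with ⟨a, b, hab, rfl, rfl⟩; exact TChain.base hab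
    | refl x => exact locE_refl top x
    | symm x y _ ih => exact locE_symm ih
    | trans x y z _ _ ih1 ih2 => exact locE_trans ih1 ih2
  · intro h
    match u, v with
    | Sum.inl b, Sum.inl b' =>
      rcases h with rfl | ⟨a, h1, h2⟩
      · exact Relation.EqvGen.refl _
      · exact ((tchain_eqvGen h1).symm _ _).trans _ _ _ (tchain_eqvGen h2)
    | Sum.inl b, Sum.inr a => exact (tchain_eqvGen h).symm _ _
    | Sum.inr a, Sum.inl b => exact tchain_eqvGen h
    | Sum.inr a, Sum.inr a' =>
      rcases h with rfl | ⟨b, h1, h2⟩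
      · exact Relation.EqvGen.refl _
      · exact (tchain_eqvGen h1).trans _ _ _ ((tchain_eqvGen h2).symm _ _)

lemma topQX_iff_tchain {X : Type} {top : X → X → Prop} {α β : X} :
    topQX top α β ↔ TChain top α β := by
  show (Quot.mk (locSim top) (Sum.inr α) : Quot (locSim top)) = Quot.mk (locSim top) (Sum.inl β) ↔ _
  rw [Quot.eq, eqvGen_iff_locE]
  exact Iff.rfl

lemma chain_tchain {X : Type} {top : X → X → Prop} {β : X} (n : ℕ) (hn : 1 ≤ n) :
    ∀ (α : X) (a b : ℕ → X), top α (b 1) → (∀ i, 1 ≤ i → i ≤ n → top (a i) (b i)) →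
      (∀ i, 1 ≤ i → i < n → top (a i) (b (i + 1))) → top (a n) β → TChain top α β := by
  induction n, hn using Nat.le_induction with
  | base =>
    intro α a b h1 h2 _ h4
    exact TChain.step h1 (h2 1 le_rfl le_rfl) (TChain.base h4)
  | succ n hn ih =>
    intro α a b h1 h2 h3 h4
    refine TChain.step h1 (h2 1 le_rfl (by omega)) ?_
    refine ih (a 1) (fun i => a (i + 1)) (fun i => b (i + 1))
      (h3 1 le_rfl (by omega)) (fun i hi1 hi2 => h2 (i + 1) (by omega) (by omega))
      (fun i hi1 hi2 => h3 (i + 1) (by omega) (by omega)) h4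

lemma tchain_chain {X : Type} {top : X → X → Prop} {α β : X} (h : TChain top α β) :
    top α β ∨
      ∃ (n : ℕ), 1 ≤ n ∧ ∃ a b : ℕ → X,
        top α (b 1) ∧
        (∀ i, 1 ≤ i → i ≤ n → top (a i) (b i)) ∧
        (∀ i, 1 ≤ i → i < n → top (a i) (b (i + 1))) ∧
        top (a n) β := by
  induction h with
  | base h0 => exact Or.inl h0
  | @step α c a1 β hc ha _ ih =>
    right
    rcases ih with h0 | ⟨n, hn, a, b, k1, k2, k3, k4⟩
    · exact ⟨1, le_rfl, fun _ => a1, fun _ => c, hc, fun i _ _ => ha,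
        fun i hi1 hi2 => by omega, h0⟩
    · refine ⟨n + 1, by omega, fun i => if i = 1 then a1 else a (i - 1),
        fun i => if i = 1 then c else b (i - 1), by simpa using hc, ?_, ?_, ?_⟩
      · intro i hi1 hi2
        by_cases h1 : i = 1
        · simpa [h1] using ha
        · simp only [if_neg h1]
          exact k2 (i - 1) (by omega) (by omega)
      · intro i hi1 hi2
        by_cases h1 : i = 1
        · subst h1
          simpa using k1
        · simp only [if_neg h1, show i + 1 ≠ 1 by omega, if_neg]
          have : i + 1 - 1 = (i - 1) + 1 := by omega
          rw [this]
          exact k3 (i - 1) (by omega) (by omega)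
      · simpa [show n ≠ 0 by omega] using k4

/-- Let `(X, ⊤_X)` be a locality set, `Q_X` its quiver, and `(X_{Q_X}, ⊤_{X_{Q_X}})`
the locality set of `Q_X` (whose underlying set is `X` itself). Then
`⊤_X ⊆ ⊤_{X_{Q_X}}`, the locality set `(X, ⊤_{X_{Q_X}})` is regular, and
explicitly `(α, β) ∈ ⊤_{X_{Q_X}}` if and only if there exist `n ≥ 0` and
`α₁, …, αₙ, β₁, …, βₙ ∈ X` with
`(α, β₁), (α₁, β₁), (α₁, β₂), …, (αₙ, βₙ), (αₙ, β) ∈ ⊤_X`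
(for `n = 0` this means `(α, β) ∈ ⊤_X`). -/
theorem localitySet_of_quiver_of_localitySet {X : Type} (top : X → X → Prop) :
    (∀ α β, top α β → topQX top α β) ∧
    IsRegularLocality (topQX top) ∧
    (∀ α β, topQX top α β ↔
      (top α β ∨
        ∃ (n : ℕ), 1 ≤ n ∧ ∃ a b : ℕ → X,
          top α (b 1) ∧
          (∀ i, 1 ≤ i → i ≤ n → top (a i) (b i)) ∧
          (∀ i, 1 ≤ i → i < n → top (a i) (b (i + 1))) ∧
          top (a n) β)) := by
  refine ⟨fun α β h => topQX_iff_tchain.mpr (TChain.base h), ?_, ?_⟩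
  · intro α β α₁ β₁ h1 h2 h3
    rw [topQX_iff_tchain] at *
    exact h2.trans1 h1 h3
  · intro α β
    rw [topQX_iff_tchain]
    constructor
    · exact tchain_chain
    · rintro (h | ⟨n, hn, a, b, h1, h2, h3, h4⟩)
      · exact TChain.base h
      · exact chain_tchain n hn α a b h1 h2 h3 h4
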